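/- Fix a haplotype matrix M with h rows and m columns, its prefix array PA, and its PBWT. For any column j with 1 ≤ j < m and any row index i with 1 < i ≤ h, if the pair (i, j) is not a run-top (i.e., PBWT[i][j] = PBWT[i-1][j]), then φ_j(c) = φ_{j+1}(c), where c = PA[i][j]; that is, the co-lexicographic predecessor of haplotype c is the same at sites j and j+1. -/

import Mathlib

/-- The row immediately above row `k` (identity on row 0). -/
def prevRow {h : ℕ} (k : Fin h) : Fin h :=
  ⟨k.val - 1, Nat.lt_of_le_of_lt (Nat.sub_le _ _) k.isLt⟩

/-- The reversed prefix of haplotype `a` up to site `j - 1` (sites are 1-indexed):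
`[M a (j-1), M a (j-2), ..., M a 1]`.  Comparing such lists lexicographically is
exactly the co-lexicographic comparison of the length-`(j-1)` prefixes. -/
def revPref {h : ℕ} (M : Fin h → ℕ → ℤ) (j : ℕ) (a : Fin h) : List ℤ :=
  ((List.range (j - 1)).reverse).map (fun t => M a (t + 1))

/-- Specification of the prefix array `PA` of the haplotype matrix `M`:
column 1 is the identity permutation, and for every column `j ≥ 1` the rows are
sorted by co-lexicographic order of the length-`(j-1)` prefixes, with ties broken
stably by original haplotype index. -/
def paSpec {h : ℕ} (M : Fin h → ℕ → ℤ) (PA : ℕ → Equiv.Perm (Fin h)) : Prop :=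
  (∀ i : Fin h, PA 1 i = i) ∧
    ∀ j, 1 ≤ j → ∀ i i' : Fin h, i < i' →
      List.Lex (· < ·) (revPref M j (PA j i)) (revPref M j (PA j i')) ∨
        (revPref M j (PA j i) = revPref M j (PA j i') ∧ PA j i < PA j i')

/-- `phi PA j c` is the color immediately above `c` in column `j` of the prefix
array (`none` when `c` occupies the first row). -/
def phi {h : ℕ} (PA : ℕ → Equiv.Perm (Fin h)) (j : ℕ) (c : Fin h) : Option (Fin h) :=
  if ((PA j).symm c).val = 0 then none
  else some (PA j (prevRow ((PA j).symm c)))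

/-- Composite sort key: (reversed prefix, haplotype index), lexicographically. -/
def paKey {h : ℕ} (M : Fin h → ℕ → ℤ) (j : ℕ) (a : Fin h) : Lex (List ℤ × Fin h) :=
  toLex (revPref M j a, a)

lemma cons_lt_cons_iff' (x y : ℤ) (s t : List ℤ) :
    (x :: s : List ℤ) < (y :: t) ↔ x < y ∨ (x = y ∧ s < t) := by
  constructor
  · intro hl
    cases hl with
    | rel h => exact Or.inl h
    | cons h => exact Or.inr ⟨rfl, h⟩
  · rintro (h | ⟨rfl, h⟩)
    · exact List.Lex.rel h
    · exact List.Lex.cons h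

lemma paKey_lt_iff {h : ℕ} (M : Fin h → ℕ → ℤ) (j : ℕ) (a b : Fin h) :
    paKey M j a < paKey M j b ↔
      revPref M j a < revPref M j b ∨ (revPref M j a = revPref M j b ∧ a < b) :=
  Prod.Lex.lt_iff

lemma revPref_succ {h : ℕ} (M : Fin h → ℕ → ℤ) {j : ℕ} (hj : 1 ≤ j) (a : Fin h) :
    revPref M (j + 1) a = M a j :: revPref M j a := by
  obtain ⟨n, rfl⟩ := Nat.exists_eq_add_of_le hj
  simp [revPref, List.range_succ, Nat.add_comm 1 n]

lemma paKey_succ_lt_iff {h : ℕ} (M : Fin h → ℕ → ℤ) {j : ℕ} (hj : 1 ≤ j) (a b : Fin h) :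
    paKey M (j + 1) a < paKey M (j + 1) b ↔
      M a j < M b j ∨ (M a j = M b j ∧ paKey M j a < paKey M j b) := by
  rw [paKey_lt_iff, paKey_lt_iff, revPref_succ M hj, revPref_succ M hj,
    cons_lt_cons_iff', List.cons_eq_cons]
  tauto

lemma paKey_strictMono {h : ℕ} {M : Fin h → ℕ → ℤ} {PA : ℕ → Equiv.Perm (Fin h)}
    (hspec : paSpec M PA) {j : ℕ} (hj : 1 ≤ j) :
    StrictMono (fun i : Fin h => paKey M j (PA j i)) := by
  intro i i' hlt
  rcases hspec.2 j hj i i' hlt with hl | ⟨he, hi⟩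
  · exact (paKey_lt_iff M j _ _).mpr (Or.inl hl)
  · exact (paKey_lt_iff M j _ _).mpr (Or.inr ⟨he, hi⟩)

/-- If `(i, j)` is not a run-top (`PBWT[i][j] = PBWT[i-1][j]`, i.e.
`M (PA j i) j = M (PA j (i-1)) j` with `i > 1`), then `φ_j(c) = φ_{j+1}(c)` for
`c = PA[i][j]`. -/
theorem stmt2 {h m : ℕ} (M : Fin h → ℕ → ℤ) (PA : ℕ → Equiv.Perm (Fin h))
    (hspec : paSpec M PA)
    (j : ℕ) (hj1 : 1 ≤ j) (hjm : j < m)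
    (i : Fin h) (hi : 0 < i.val)
    (hrun : M (PA j i) j = M (PA j (prevRow i)) j) :
    phi PA j (PA j i) = phi PA (j + 1) (PA j i) := by
  have g := paKey_strictMono hspec hj1
  have gs := paKey_strictMono hspec (j := j + 1) (by omega)
  set c := PA j i with hc
  set d := PA j (prevRow i) with hd
  have hpi : prevRow i < i := by
    show (prevRow i).val < i.val
    simp only [prevRow]; omega
  -- key inequality at column j
  have hdc : paKey M j d < paKey M j c := g hpi
  -- key inequality at column j+1
  have hdc' : paKey M (j + 1) d < paKey M (j + 1) c :=
    (paKey_succ_lt_iff M hj1 d c).mpr (Or.inr ⟨hrun.symm, hdc⟩)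
  set k := (PA (j + 1)).symm c with hk
  set kd := (PA (j + 1)).symm d with hkd
  have hgk : PA (j + 1) k = c := Equiv.apply_symm_apply _ _
  have hgkd : PA (j + 1) kd = d := Equiv.apply_symm_apply _ _
  have hkdk : kd < k := by
    apply gs.lt_iff_lt.mp
    simpa [hgkd, hgk] using hdc'
  have hk0 : 0 < k.val := lt_of_le_of_lt (Nat.zero_le _) hkdk
  have hpk : prevRow k < k := by
    show (prevRow k).val < k.val
    simp only [prevRow]; omega
  -- show kd = prevRow k
  have hkdpk : kd = prevRow k := by
    by_contra hne
    have hlt : kd < prevRow k := by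
      have : kd.val ≤ (prevRow k).val := by
        have : kd.val < k.val := hkdk
        simp only [prevRow]; omega
      cases lt_or_eq_of_le this with
      | inl hh => exact hh
      | inr hh => exact absurd (Fin.ext hh) hne
    set e := PA (j + 1) (prevRow k) with he
    have h1 : paKey M (j + 1) d < paKey M (j + 1) e := by
      simpa [hgkd, ← he] using gs hlt
    have h2 : paKey M (j + 1) e < paKey M (j + 1) c := by
      simpa [hgk, ← he] using gs hpk
    rw [paKey_succ_lt_iff M hj1] at h1 h2
    have hMdc : M d j = M c j := hrun.symm
    have h1' : paKey M j d < paKey M j e := by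
      rcases h1 with h1 | ⟨_, h1⟩
      · rcases h2 with h2 | ⟨h2, _⟩ <;> omega
      · exact h1
    have h2' : paKey M j e < paKey M j c := by
      rcases h2 with h2 | ⟨_, h2⟩
      · rcases h1 with h1 | ⟨h1, _⟩ <;> omega
      · exact h2
    set q := (PA j).symm e with hq
    have hge : PA j q = e := Equiv.apply_symm_apply _ _
    have hq1 : prevRow i < q := by
      apply g.lt_iff_lt.mp
      simpa [hge, ← hd] using h1'
    have hq2 : q < i := by
      apply g.lt_iff_lt.mp
      simpa [hge, ← hc] using h2'
    have e1 : (prevRow i).val < q.val := hq1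
    have e2 : q.val < i.val := hq2
    simp only [prevRow] at e1
    omega
  -- conclude
  have hsymj : (PA j).symm c = i := Equiv.symm_apply_apply _ _
  rw [phi, phi, hsymj, if_neg (by omega)]
  rw [if_neg (by rw [← hk]; omega)]
  rw [← hk, ← hkdpk, hgkd, hd]
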